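/- Let σ > 0, λ > 0, let x0 : ℕ → ℝ be a fixed real sequence, let (W_i)_{i∈ℕ} be i.i.d. centered Gaussian random variables of variance σ², and set Y_i = x0_i + W_i. Let h : ℕ → (0,∞) satisfy h(P) → 0 and 1/(P·h(P)) → 0 as P → ∞. Then (1/P)·(EDOF_HT((Y_1,…,Y_P), λ, h(P)) − DOF_HT((x0_1,…,x0_P), λ)) converges to 0 in probability as P → ∞. -/

import Mathlib

open MeasureTheory ProbabilityTheory Filter Real Set
open scoped NNReal ENNReal Topology

set_option maxHeartbeats 1000000

/-- Scalar hard thresholding at threshold `lam`. -/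
noncomputable def HT (lam y : ℝ) : ℝ := if |y| < lam then 0 else y

/-- The DOF estimator `EDOF_HT(y, λ, h)` for hard thresholding. -/
noncomputable def EDOF (σ lam h : ℝ) (P : ℕ) (y : ℕ → ℝ) : ℝ :=
  (∑ i ∈ Finset.range P, if lam < |y i| then (1 : ℝ) else 0) +
    lam * Real.sqrt (σ ^ 2 + h ^ 2) / (Real.sqrt (2 * π) * σ * h) *
      ∑ i ∈ Finset.range P,
        (Real.exp (-(y i + lam) ^ 2 / (2 * h ^ 2)) +
          Real.exp (-(y i - lam) ^ 2 / (2 * h ^ 2)))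

/-- Covariance of two real random variables. -/
noncomputable def cov {Ω : Type*} [MeasurableSpace Ω] (μ : Measure Ω) (X Y : Ω → ℝ) : ℝ :=
  ∫ ω, (X ω - ∫ x, X x ∂μ) * (Y ω - ∫ x, Y x ∂μ) ∂μ

/-- The degrees of freedom of hard thresholding:
`DOF_HT(x0, λ) = ∑ i Cov(Y i, HT(Y i, λ)) / σ²` where `Y` is the (random) observation. -/
noncomputable def DOF {Ω : Type*} [MeasurableSpace Ω] (μ : Measure Ω) (σ lam : ℝ) (P : ℕ)
    (Y : ℕ → Ω → ℝ) : ℝ :=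
  ∑ i ∈ Finset.range P, cov μ (Y i) (fun ω => HT lam (Y i ω)) / σ ^ 2


namespace SD


/-- the centered Gaussian density -/
noncomputable def gpdf (σ w : ℝ) : ℝ := (Real.sqrt (2*π*σ^2))⁻¹ * Real.exp (-w^2/(2*σ^2))

lemma gpdf_eq (σ : ℝ) : gaussianPDFReal 0 ⟨σ^2, sq_nonneg σ⟩ = gpdf σ := by
  funext w
  simp [gaussianPDFReal, gpdf]
  rfl

lemma gpdf_total {σ : ℝ} (hσ : 0 < σ) : ∫ w, gpdf σ w = 1 := by
  have hv : (⟨σ^2, sq_nonneg σ⟩ : ℝ≥0) ≠ 0 := by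
    intro hc
    have h2 : ((⟨σ^2, sq_nonneg σ⟩ : ℝ≥0) : ℝ) = ((0 : ℝ≥0) : ℝ) :=
      congrArg (fun x : ℝ≥0 => (x : ℝ)) hc
    simp only [NNReal.coe_mk, NNReal.coe_zero] at h2
    nlinarith
  rw [← gpdf_eq σ]
  exact integral_gaussianPDFReal_eq_one 0 hv

lemma gpdf_nonneg (σ w : ℝ) : 0 ≤ gpdf σ w := by
  unfold gpdf; positivity

lemma measurable_gpdf (σ : ℝ) : Measurable (gpdf σ) := by
  unfold gpdf; fun_prop

lemma integral_gauss {σ : ℝ} (hσ : 0 < σ) (f : ℝ → ℝ) :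
    ∫ w, f w ∂(gaussianReal 0 ⟨σ^2, sq_nonneg σ⟩) = ∫ w, gpdf σ w * f w := by
  have hv : (⟨σ^2, sq_nonneg σ⟩ : ℝ≥0) ≠ 0 := by
    intro hc
    have h2 : ((⟨σ^2, sq_nonneg σ⟩ : ℝ≥0) : ℝ) = ((0 : ℝ≥0) : ℝ) :=
      congrArg (fun x : ℝ≥0 => (x : ℝ)) hc
    simp only [NNReal.coe_mk, NNReal.coe_zero] at h2
    nlinarith
  rw [integral_gaussianReal_eq_integral_smul hv]
  congr 1
  funext w
  rw [smul_eq_mul, gpdf_eq]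

lemma integrable_gauss_iff {σ : ℝ} (hσ : 0 < σ) (f : ℝ → ℝ) :
    Integrable f (gaussianReal 0 ⟨σ^2, sq_nonneg σ⟩) ↔
      Integrable (fun w => gpdf σ w * f w) := by
  have hv : (⟨σ^2, sq_nonneg σ⟩ : ℝ≥0) ≠ 0 := by
    intro hc
    have h2 : ((⟨σ^2, sq_nonneg σ⟩ : ℝ≥0) : ℝ) = ((0 : ℝ≥0) : ℝ) :=
      congrArg (fun x : ℝ≥0 => (x : ℝ)) hc
    simp only [NNReal.coe_mk, NNReal.coe_zero] at h2
    nlinarith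
  rw [gaussianReal_of_var_ne_zero 0 hv]
  refine (integrable_withDensity_iff_integrable_smul' (measurable_gaussianPDF 0 _)
    (Eventually.of_forall fun _ => gaussianPDF_lt_top)).trans ?_
  constructor <;> intro h <;> refine h.congr (Eventually.of_forall fun w => ?_)
  · exact congrArg (· * f w) ((toReal_gaussianPDF w).trans (congrFun (gpdf_eq σ) w))
  · exact (congrArg (· * f w) ((toReal_gaussianPDF w).trans (congrFun (gpdf_eq σ) w))).symm



variable {σ : ℝ}

lemma exp_form (σ : ℝ) (w : ℝ) : Real.exp (-w^2/(2*σ^2)) = Real.exp (-(1/(2*σ^2)) * w^2) := by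
  congr 1; ring

lemma int_e (hσ : 0 < σ) : Integrable (fun w => Real.exp (-w^2/(2*σ^2))) := by
  simp_rw [exp_form σ]
  exact integrable_exp_neg_mul_sq (by positivity)

lemma int_we (hσ : 0 < σ) : Integrable (fun w => w * Real.exp (-w^2/(2*σ^2))) := by
  simp_rw [exp_form σ]
  exact integrable_mul_exp_neg_mul_sq (by positivity)

lemma sq_exp_bound (hσ : 0 < σ) (w : ℝ) :
    w^2 * Real.exp (-w^2/(2*σ^2)) ≤ (4*σ^2) * Real.exp (-(1/(4*σ^2)) * w^2) := by
  have h1 : w^2/(4*σ^2) ≤ Real.exp (w^2/(4*σ^2)) := by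
    have := Real.add_one_le_exp (w^2/(4*σ^2)); linarith
  have h2 : w^2 ≤ 4*σ^2 * Real.exp (w^2/(4*σ^2)) := by
    have h4 : (0:ℝ) < 4*σ^2 := by positivity
    rw [div_le_iff₀ h4] at h1; linarith [h1]
  have h3 : Real.exp (w^2/(4*σ^2)) * Real.exp (-w^2/(2*σ^2)) =
      Real.exp (-(1/(4*σ^2)) * w^2) := by
    rw [← Real.exp_add]; congr 1; field_simp; ring
  calc w^2 * Real.exp (-w^2/(2*σ^2))
      ≤ (4*σ^2 * Real.exp (w^2/(4*σ^2))) * Real.exp (-w^2/(2*σ^2)) := by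
        exact mul_le_mul_of_nonneg_right h2 (Real.exp_nonneg _)
    _ = (4*σ^2) * Real.exp (-(1/(4*σ^2)) * w^2) := by rw [mul_assoc, h3]

lemma int_sqe (hσ : 0 < σ) : Integrable (fun w => w^2 * Real.exp (-w^2/(2*σ^2))) := by
  refine Integrable.mono' ((integrable_exp_neg_mul_sq (b := 1/(4*σ^2)) (by positivity)).const_mul
    (4*σ^2)) ?_ (Eventually.of_forall fun w => ?_)
  · apply Measurable.aestronglyMeasurable; fun_prop
  · rw [Real.norm_eq_abs, abs_of_nonneg (by positivity)]
    exact sq_exp_bound hσ w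

lemma tendsto_e (hσ : 0 < σ) : Tendsto (fun w => Real.exp (-w^2/(2*σ^2))) atTop (𝓝 0) := by
  apply Real.tendsto_exp_atBot.comp
  have h1 : Tendsto (fun w : ℝ => w^2 / (2*σ^2)) atTop atTop :=
    (tendsto_pow_atTop two_ne_zero).atTop_div_const (by positivity)
  have := tendsto_neg_atTop_atBot.comp h1
  refine this.congr fun w => ?_
  simp [neg_div]

lemma tendsto_we (hσ : 0 < σ) :
    Tendsto (fun w => w * Real.exp (-w^2/(2*σ^2))) atTop (𝓝 0) := by
  have hhalf : Tendsto (fun x : ℝ => Real.exp (-(1/2) * x)) atTop (𝓝 0) := by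
    apply Real.tendsto_exp_atBot.comp
    have h1 : Tendsto (fun x : ℝ => (1/2 : ℝ) * x) atTop atTop :=
      (tendsto_id.const_mul_atTop (by norm_num))
    have := tendsto_neg_atTop_atBot.comp h1
    refine this.congr fun w => ?_
    simp
  have h := (rpow_mul_exp_neg_mul_sq_isLittleO_exp_neg (b := 1/(2*σ^2)) (by positivity)
    (1 : ℝ)).tendsto_zero_of_tendsto hhalf
  refine Tendsto.congr' ?_ h
  filter_upwards [eventually_ge_atTop (0:ℝ)] with w hw
  rw [Real.rpow_one, ← exp_form σ]

/-- FTC: tail first-moment integral. -/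
lemma intIoi_we (hσ : 0 < σ) (b : ℝ) :
    ∫ w in Ioi b, w * Real.exp (-w^2/(2*σ^2)) = σ^2 * Real.exp (-b^2/(2*σ^2)) := by
  have hderiv : ∀ x ∈ Ici b, HasDerivAt (fun w => -σ^2 * Real.exp (-w^2/(2*σ^2)))
      (x * Real.exp (-x^2/(2*σ^2))) x := by
    intro x _
    have h1 : HasDerivAt (fun w : ℝ => -w^2/(2*σ^2)) (-(2*x^1)/(2*σ^2)) x :=
      ((hasDerivAt_pow 2 x).neg).div_const _
    have h2 := (h1.exp).const_mul (-σ^2)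
    refine h2.congr_deriv ?_
    field_simp
  have htend : Tendsto (fun w => -σ^2 * Real.exp (-w^2/(2*σ^2))) atTop (𝓝 0) := by
    simpa using (tendsto_e hσ).const_mul (-σ^2)
  have key := integral_Ioi_of_hasDerivAt_of_tendsto'
    (fun x hx => hderiv x hx) ((int_we hσ).integrableOn) htend
  rw [key]; ring



variable {σ : ℝ}

/-- FTC: tail second-moment integral. -/
lemma intIoi_sqe (hσ : 0 < σ) (b : ℝ) :
    ∫ w in Ioi b, w^2 * Real.exp (-w^2/(2*σ^2)) =
      σ^2 * (∫ w in Ioi b, Real.exp (-w^2/(2*σ^2))) + σ^2 * b * Real.exp (-b^2/(2*σ^2)) := by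
  have hderiv : ∀ x ∈ Ici b, HasDerivAt (fun w => -σ^2 * (w * Real.exp (-w^2/(2*σ^2))))
      (x^2 * Real.exp (-x^2/(2*σ^2)) - σ^2 * Real.exp (-x^2/(2*σ^2))) x := by
    intro x _
    have h1 : HasDerivAt (fun w : ℝ => -w^2/(2*σ^2)) (-(2*x^1)/(2*σ^2)) x :=
      ((hasDerivAt_pow 2 x).neg).div_const _
    have h2 : HasDerivAt (fun w : ℝ => w * Real.exp (-w^2/(2*σ^2)))
        (1 * Real.exp (-x^2/(2*σ^2)) + x * (Real.exp (-x^2/(2*σ^2)) * (-(2*x^1)/(2*σ^2)))) x :=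
      (hasDerivAt_id x).mul h1.exp
    have h3 := h2.const_mul (-σ^2)
    refine h3.congr_deriv ?_
    field_simp; ring
  have hint : IntegrableOn (fun x => x^2 * Real.exp (-x^2/(2*σ^2))
      - σ^2 * Real.exp (-x^2/(2*σ^2))) (Ioi b) :=
    ((int_sqe hσ).sub ((int_e hσ).const_mul (σ^2))).integrableOn
  have htend : Tendsto (fun w => -σ^2 * (w * Real.exp (-w^2/(2*σ^2)))) atTop (𝓝 0) := by
    simpa using (tendsto_we hσ).const_mul (-σ^2)
  have key := integral_Ioi_of_hasDerivAt_of_tendsto' hderiv hint htend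
  have hsplit : ∫ x in Ioi b, (x^2 * Real.exp (-x^2/(2*σ^2))
      - σ^2 * Real.exp (-x^2/(2*σ^2))) =
      (∫ x in Ioi b, x^2 * Real.exp (-x^2/(2*σ^2)))
        - σ^2 * ∫ x in Ioi b, Real.exp (-x^2/(2*σ^2)) := by
    rw [integral_sub ((int_sqe hσ).integrableOn) (((int_e hσ).const_mul (σ^2)).integrableOn),
      integral_const_mul]
  rw [hsplit] at key
  have : -σ^2 * (b * Real.exp (-b^2/(2*σ^2))) = -(σ^2 * b * Real.exp (-b^2/(2*σ^2))) := by ring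
  linarith [key]

lemma intIic_we (hσ : 0 < σ) (a : ℝ) :
    ∫ w in Iic a, w * Real.exp (-w^2/(2*σ^2)) = -(σ^2 * Real.exp (-a^2/(2*σ^2))) := by
  have h := integral_comp_neg_Ioi (-a) (fun w => w * Real.exp (-w^2/(2*σ^2)))
  simp only [neg_neg] at h
  rw [← h]
  have : ∀ x : ℝ, -x * Real.exp (-(-x)^2/(2*σ^2)) = -(x * Real.exp (-x^2/(2*σ^2))) := by
    intro x; rw [neg_sq]; ring
  simp_rw [this, integral_neg, intIoi_we hσ, neg_sq]

lemma intIic_sqe (hσ : 0 < σ) (a : ℝ) :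
    ∫ w in Iic a, w^2 * Real.exp (-w^2/(2*σ^2)) =
      σ^2 * (∫ w in Iic a, Real.exp (-w^2/(2*σ^2))) - σ^2 * a * Real.exp (-a^2/(2*σ^2)) := by
  have h := integral_comp_neg_Ioi (-a) (fun w => w^2 * Real.exp (-w^2/(2*σ^2)))
  simp only [neg_neg] at h
  rw [← h]
  have h2 := integral_comp_neg_Ioi (-a) (fun w => Real.exp (-w^2/(2*σ^2)))
  simp only [neg_neg] at h2
  rw [← h2]
  simp_rw [neg_sq]
  rw [intIoi_sqe hσ]
  simp only [neg_sq, neg_mul, sub_eq_add_neg, mul_neg]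

lemma int_we_zero (hσ : 0 < σ) : ∫ w, w * Real.exp (-w^2/(2*σ^2)) = 0 := by
  have h := integral_neg_eq_self (fun w => w * Real.exp (-w^2/(2*σ^2))) (volume : Measure ℝ)
  have h2 : ∀ x : ℝ, -x * Real.exp (-(-x)^2/(2*σ^2)) = -(x * Real.exp (-x^2/(2*σ^2))) := by
    intro x; rw [neg_sq]; ring
  simp_rw [h2, integral_neg] at h
  linarith

/-- The Gaussian convolution/kernel integral. -/
lemma kern (hσ : 0 < σ) (t : ℝ) {δ : ℝ} (hδ : 0 < δ) :
    ∫ w, Real.exp (-(w-t)^2/δ) * Real.exp (-w^2/(2*σ^2)) =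
      Real.sqrt (π * (2*δ*σ^2)/(2*σ^2+δ)) * Real.exp (-t^2/(2*σ^2+δ)) := by
  set α : ℝ := (2*σ^2+δ)/(2*δ*σ^2) with hα
  set c : ℝ := 2*t*σ^2/(2*σ^2+δ) with hc
  have hαpos : 0 < α := by positivity
  have hpt : ∀ w : ℝ, Real.exp (-(w-t)^2/δ) * Real.exp (-w^2/(2*σ^2)) =
      Real.exp (-t^2/(2*σ^2+δ)) * Real.exp (-α * (w - c)^2) := by
    intro w
    rw [← Real.exp_add, ← Real.exp_add]
    congr 1
    rw [hα, hc]
    field_simp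
    ring
  simp_rw [hpt]
  rw [integral_const_mul]
  have hshift : ∫ w, Real.exp (-α * (w - c)^2) = ∫ w, Real.exp (-α * w^2) :=
    integral_sub_right_eq_self (fun u => Real.exp (-α * u^2)) c
  rw [hshift, integral_gaussian]
  rw [mul_comm]
  congr 1
  rw [hα]
  congr 1
  field_simp


variable {σ lam : ℝ}


/-- estimator coefficient -/
noncomputable def cHT (σ lam hh : ℝ) : ℝ :=
  lam * Real.sqrt (σ^2 + hh^2) / (Real.sqrt (2*π) * σ * hh)

/-- per-coordinate estimator as a function of the noise -/
noncomputable def Fest (σ lam hh m : ℝ) (w : ℝ) : ℝ :=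
  (if lam < |m + w| then (1:ℝ) else 0) +
    cHT σ lam hh * (Real.exp (-(m + w + lam)^2/(2*hh^2)) +
      Real.exp (-(m + w - lam)^2/(2*hh^2)))

noncomputable def dval (σ lam m : ℝ) : ℝ :=
  (∫ w in Iic (-lam-m), gpdf σ w) + (∫ w in Ioi (lam-m), gpdf σ w) +
    lam * (Real.sqrt (2*π) * σ)⁻¹ *
      (Real.exp (-(lam-m)^2/(2*σ^2)) + Real.exp (-(lam+m)^2/(2*σ^2)))

noncomputable def EFval (σ lam hh m : ℝ) : ℝ :=
  (∫ w in Iic (-lam-m), gpdf σ w) + (∫ w in Ioi (lam-m), gpdf σ w) +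
    lam * (Real.sqrt (2*π) * σ)⁻¹ *
      (Real.exp (-(lam+m)^2/(2*(σ^2+hh^2))) + Real.exp (-(lam-m)^2/(2*(σ^2+hh^2))))

lemma sqrt_two_pi_sq (hσ : 0 < σ) : Real.sqrt (2*π*σ^2) = Real.sqrt (2*π) * σ := by
  rw [Real.sqrt_mul (by positivity), Real.sqrt_sq hσ.le]

lemma gpdf_integrable (hσ : 0 < σ) : Integrable (gpdf σ) := by
  unfold gpdf
  exact (int_e hσ).const_mul _

lemma cHT_pos (hσ : 0 < σ) (hlam : 0 < lam) {hh : ℝ} (hh0 : 0 < hh) : 0 < cHT σ lam hh := by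
  unfold cHT
  have : (0:ℝ) < Real.sqrt (σ^2+hh^2) := Real.sqrt_pos.2 (by positivity)
  have h2 : (0:ℝ) < Real.sqrt (2*π) := Real.sqrt_pos.2 (by positivity)
  positivity

lemma coeff_eq (hσ : 0 < σ) {hh : ℝ} (hh0 : 0 < hh) :
    cHT σ lam hh * ((Real.sqrt (2*π*σ^2))⁻¹ *
      Real.sqrt (π * (2*(2*hh^2)*σ^2)/(2*σ^2+2*hh^2))) = lam * (Real.sqrt (2*π) * σ)⁻¹ := by
  have hs : (0:ℝ) < σ^2 + hh^2 := by positivity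
  have h2 : π * (2*(2*hh^2)*σ^2)/(2*σ^2+2*hh^2) =
      (2*π) * (hh*σ/Real.sqrt (σ^2+hh^2))^2 := by
    rw [div_pow, mul_pow, Real.sq_sqrt hs.le]
    field_simp
  have h3 : Real.sqrt (π * (2*(2*hh^2)*σ^2)/(2*σ^2+2*hh^2)) =
      Real.sqrt (2*π) * (hh*σ/Real.sqrt (σ^2+hh^2)) := by
    rw [h2, Real.sqrt_mul (by positivity), Real.sqrt_sq (by positivity)]
  rw [h3, sqrt_two_pi_sq hσ]
  unfold cHT
  have hsq : (0:ℝ) < Real.sqrt (σ^2+hh^2) := Real.sqrt_pos.2 hs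
  have h2p : (0:ℝ) < Real.sqrt (2*π) := Real.sqrt_pos.2 (by positivity)
  field_simp

lemma region_iff (hlam : 0 < lam) (m x : ℝ) :
    lam ≤ |m + x| ↔ x ∈ Iic (-lam-m) ∪ Ici (lam-m) := by
  rw [le_abs]
  constructor
  · rintro (h | h)
    · right; simp only [mem_Ici]; linarith
    · left; simp only [mem_Iic]; linarith
  · rintro (h | h)
    · right; simp only [mem_Iic] at h; linarith
    · left; simp only [mem_Ici] at h; linarith

lemma region_iff' (hlam : 0 < lam) (m x : ℝ) :
    lam < |m + x| ↔ x ∈ Iio (-lam-m) ∪ Ioi (lam-m) := by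
  rw [lt_abs]
  constructor
  · rintro (h | h)
    · right; simp only [mem_Ioi]; linarith
    · left; simp only [mem_Iio]; linarith
  · rintro (h | h)
    · right; simp only [mem_Iio] at h; linarith
    · left; simp only [mem_Ioi] at h; linarith

/-- Expectation of the per-coordinate estimator. -/
lemma EF_eq (hσ : 0 < σ) (hlam : 0 < lam) {hh : ℝ} (hh0 : 0 < hh) (m : ℝ) :
    ∫ w, Fest σ lam hh m w ∂(gaussianReal 0 ⟨σ^2, sq_nonneg σ⟩) = EFval σ lam hh m := by
  rw [integral_gauss hσ]
  have hKp : ∀ w : ℝ, Real.exp (-(m + w + lam)^2/(2*hh^2)) =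
      Real.exp (-(w - (-(m+lam)))^2/(2*hh^2)) := by
    intro w; congr 1; ring
  have hKm : ∀ w : ℝ, Real.exp (-(m + w - lam)^2/(2*hh^2)) =
      Real.exp (-(w - (lam - m))^2/(2*hh^2)) := by
    intro w; congr 1; ring
  have hpt : ∀ w : ℝ, gpdf σ w * Fest σ lam hh m w =
      (Iio (-lam-m) ∪ Ioi (lam-m)).indicator (gpdf σ) w +
      (cHT σ lam hh * ((Real.sqrt (2*π*σ^2))⁻¹ *
        (Real.exp (-(w - (-(m+lam)))^2/(2*hh^2)) * Real.exp (-w^2/(2*σ^2)))) +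
       cHT σ lam hh * ((Real.sqrt (2*π*σ^2))⁻¹ *
        (Real.exp (-(w - (lam-m))^2/(2*hh^2)) * Real.exp (-w^2/(2*σ^2))))) := by
    intro w
    unfold Fest
    rw [← hKp, ← hKm]
    unfold gpdf
    rw [Set.indicator_apply]
    by_cases hcase : lam < |m + w|
    · rw [if_pos hcase, if_pos ((region_iff' hlam m w).1 hcase)]
      ring
    · rw [if_neg hcase, if_neg (fun hc => hcase ((region_iff' hlam m w).2 hc))]
      ring
  simp_rw [hpt]
  have meas_union : MeasurableSet (Iio (-lam-m) ∪ Ioi (lam-m)) :=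
    measurableSet_Iio.union measurableSet_Ioi
  have int_ind : Integrable ((Iio (-lam-m) ∪ Ioi (lam-m)).indicator (gpdf σ)) :=
    (gpdf_integrable hσ).indicator meas_union
  have int_K : ∀ t : ℝ, Integrable (fun w => cHT σ lam hh * ((Real.sqrt (2*π*σ^2))⁻¹ *
      (Real.exp (-(w - t)^2/(2*hh^2)) * Real.exp (-w^2/(2*σ^2))))) := by
    intro t
    apply Integrable.const_mul
    apply Integrable.const_mul
    apply Integrable.mono' (int_e hσ)
    · apply Measurable.aestronglyMeasurable; fun_prop
    · refine Eventually.of_forall fun w => ?_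
      rw [Real.norm_eq_abs, abs_of_nonneg (by positivity)]
      have h1 : Real.exp (-(w - t)^2/(2*hh^2)) ≤ 1 := by
        rw [Real.exp_le_one_iff]
        exact div_nonpos_of_nonpos_of_nonneg (neg_nonpos.2 (sq_nonneg _)) (by positivity)
      nlinarith [Real.exp_pos (-w^2/(2*σ^2)), Real.exp_nonneg (-(w-t)^2/(2*hh^2))]
  have I1 := integral_add int_ind ((int_K (-(m+lam))).add (int_K (lam-m)))
  simp only [Pi.add_apply] at I1
  have I2 := integral_add (int_K (-(m+lam))) (int_K (lam-m))
  rw [I1, I2]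
  have hker : ∀ t : ℝ, ∫ w, cHT σ lam hh * ((Real.sqrt (2*π*σ^2))⁻¹ *
      (Real.exp (-(w - t)^2/(2*hh^2)) * Real.exp (-w^2/(2*σ^2)))) =
      lam * (Real.sqrt (2*π) * σ)⁻¹ * Real.exp (-t^2/(2*(σ^2+hh^2))) := by
    intro t
    rw [integral_const_mul, integral_const_mul, kern hσ t (by positivity : (0:ℝ) < 2*hh^2)]
    have hexp : Real.exp (-t^2/(2*σ^2+2*hh^2)) = Real.exp (-t^2/(2*(σ^2+hh^2))) := by
      congr 1; ring
    rw [← coeff_eq hσ hh0 (lam := lam), ← hexp]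
    ring
  rw [hker, hker]
  rw [integral_indicator meas_union]
  have hdisj : Disjoint (Iio (-lam-m)) (Ioi (lam-m)) := by
    rw [Set.disjoint_left]
    intro x hx hx'
    simp only [mem_Iio] at hx
    simp only [mem_Ioi] at hx'
    linarith
  rw [setIntegral_union hdisj measurableSet_Ioi
    ((gpdf_integrable hσ).integrableOn) ((gpdf_integrable hσ).integrableOn)]
  rw [setIntegral_congr_set Iio_ae_eq_Iic]
  unfold EFval
  have ht1 : (-(m+lam))^2 = (lam+m)^2 := by ring
  rw [ht1]
  have ht2 : (lam - m)^2 = (lam-m)^2 := rfl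
  ring

variable {σ lam : ℝ}

lemma measurable_HT : Measurable (HT lam) := by
  unfold HT
  exact Measurable.ite (measurableSet_lt (by fun_prop) measurable_const)
    measurable_const measurable_id

lemma abs_HT_le (lam y : ℝ) : |HT lam y| ≤ |y| := by
  unfold HT
  split
  · simp
  · exact le_refl _

section OmegaSpace
variable {Ω : Type*} [MeasurableSpace Ω] {μpr : Measure Ω} [IsProbabilityMeasure μpr]

lemma comp_integral (hσ : 0 < σ) {X : Ω → ℝ} (hX : Measurable X)
    (hd : Measure.map X μpr = gaussianReal 0 ⟨σ^2, sq_nonneg σ⟩)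
    {f : ℝ → ℝ} (hf : Measurable f) :
    ∫ ω, f (X ω) ∂μpr = ∫ w, gpdf σ w * f w := by
  have h1 : ∫ w, f w ∂(Measure.map X μpr) = ∫ ω, f (X ω) ∂μpr :=
    integral_map hX.aemeasurable (by rw [hd]; exact hf.aestronglyMeasurable)
  rw [← h1, hd, integral_gauss hσ]

lemma comp_integrable (hσ : 0 < σ) {X : Ω → ℝ} (hX : Measurable X)
    (hd : Measure.map X μpr = gaussianReal 0 ⟨σ^2, sq_nonneg σ⟩)
    {f : ℝ → ℝ} (hf : Measurable f)
    (hint : Integrable (fun w => gpdf σ w * f w)) : Integrable (fun ω => f (X ω)) μpr := by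
  have h2 : Integrable f (Measure.map X μpr) := by
    rw [hd, integrable_gauss_iff hσ]; exact hint
  exact (integrable_map_measure (by rw [hd]; exact hf.aestronglyMeasurable)
    hX.aemeasurable).1 h2

lemma gpdf_id_int (hσ : 0 < σ) : Integrable (fun w => gpdf σ w * w) := by
  unfold gpdf
  have : ∀ w : ℝ, (Real.sqrt (2*π*σ^2))⁻¹ * Real.exp (-w^2/(2*σ^2)) * w =
      (Real.sqrt (2*π*σ^2))⁻¹ * (w * Real.exp (-w^2/(2*σ^2))) := by intro w; ring
  simp_rw [this]
  exact (int_we hσ).const_mul _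

lemma gpdf_id_zero (hσ : 0 < σ) : ∫ w, gpdf σ w * w = 0 := by
  unfold gpdf
  have : ∀ w : ℝ, (Real.sqrt (2*π*σ^2))⁻¹ * Real.exp (-w^2/(2*σ^2)) * w =
      (Real.sqrt (2*π*σ^2))⁻¹ * (w * Real.exp (-w^2/(2*σ^2))) := by intro w; ring
  simp_rw [this]
  rw [integral_const_mul, int_we_zero hσ, mul_zero]

/-- The covariance formula for hard thresholding of a Gaussian. -/
lemma cov_eq (hσ : 0 < σ) (hlam : 0 < lam) {X : Ω → ℝ} (hX : Measurable X)
    (hd : Measure.map X μpr = gaussianReal 0 ⟨σ^2, sq_nonneg σ⟩) (m : ℝ) :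
    cov μpr (fun ω => m + X ω) (fun ω => HT lam (m + X ω)) = σ^2 * dval σ lam m := by
  -- mean of m + X
  have hmean : ∫ ω, (m + X ω) ∂μpr = m := by
    have hfm : Measurable (fun x : ℝ => m + x) := by fun_prop
    rw [comp_integral hσ hX hd hfm]
    have : ∀ w : ℝ, gpdf σ w * (m + w) = m * gpdf σ w + gpdf σ w * w := by intro w; ring
    simp_rw [this]
    rw [integral_add ((gpdf_integrable hσ).const_mul m) (gpdf_id_int hσ), integral_const_mul,
      gpdf_total hσ, gpdf_id_zero hσ]
    ring
  unfold cov
  simp only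
  rw [hmean]
  set Hbar := ∫ x, HT lam (m + X x) ∂μpr with hH
  -- transfer to the real line
  have hfm : Measurable (fun x : ℝ => x * (HT lam (m + x) - Hbar)) :=
    measurable_id.mul ((measurable_HT.comp (measurable_const.add measurable_id)).sub
      measurable_const)
  have hcomp : ∫ ω, (m + X ω - m) * (HT lam (m + X ω) - Hbar) ∂μpr
      = ∫ w, gpdf σ w * (w * (HT lam (m + w) - Hbar)) := by
    rw [← comp_integral hσ hX hd hfm]
    congr 1; funext ω; ring_nf
  rw [hcomp]
  -- dominating integrable function
  have habs : Integrable (fun w => |w| * Real.exp (-w^2/(2*σ^2))) := by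
    refine (int_we hσ).abs.congr (Eventually.of_forall fun w => ?_)
    dsimp only
    rw [abs_mul, abs_of_pos (Real.exp_pos _)]
  have hdom : Integrable (fun w => (Real.sqrt (2*π*σ^2))⁻¹ *
      (|m| * (|w| * Real.exp (-w^2/(2*σ^2))) + w^2 * Real.exp (-w^2/(2*σ^2)))) :=
    ((habs.const_mul |m|).add (int_sqe hσ)).const_mul _
  have hbound : ∀ w z : ℝ, |z| ≤ |m + w| →
      ‖gpdf σ w * (w * z)‖ ≤ (Real.sqrt (2*π*σ^2))⁻¹ *
      (|m| * (|w| * Real.exp (-w^2/(2*σ^2))) + w^2 * Real.exp (-w^2/(2*σ^2))) := by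
    intro w z hz
    have h1 : |w * z| ≤ |m| * |w| + w^2 := by
      have h2 : |m + w| ≤ |m| + |w| := abs_add_le m w
      have h3 : |w * z| = |w| * |z| := abs_mul w z
      nlinarith [abs_nonneg w, abs_nonneg z, abs_nonneg m, sq_abs w, abs_nonneg (m+w)]
    rw [Real.norm_eq_abs, abs_mul, abs_of_nonneg (gpdf_nonneg σ w)]
    unfold gpdf
    have hc0 : (0:ℝ) ≤ (Real.sqrt (2*π*σ^2))⁻¹ := by positivity
    have hew : (0:ℝ) < Real.exp (-w^2/(2*σ^2)) := Real.exp_pos _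
    calc (Real.sqrt (2*π*σ^2))⁻¹ * Real.exp (-w^2/(2*σ^2)) * |w * z|
        ≤ (Real.sqrt (2*π*σ^2))⁻¹ * Real.exp (-w^2/(2*σ^2)) * (|m| * |w| + w^2) := by
          apply mul_le_mul_of_nonneg_left h1 (by positivity)
      _ = (Real.sqrt (2*π*σ^2))⁻¹ *
          (|m| * (|w| * Real.exp (-w^2/(2*σ^2))) + w^2 * Real.exp (-w^2/(2*σ^2))) := by ring
  have hwHT_meas : Measurable (fun w : ℝ => gpdf σ w * (w * HT lam (m + w))) :=
    (measurable_gpdf σ).mul (measurable_id.mul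
      (measurable_HT.comp (measurable_const.add measurable_id)))
  have hwHT_int : Integrable (fun w => gpdf σ w * (w * HT lam (m + w))) := by
    refine hdom.mono' hwHT_meas.aestronglyMeasurable (Eventually.of_forall fun w => ?_)
    exact hbound w _ (abs_HT_le lam (m + w))
  have hq_meas : Measurable (fun w : ℝ => gpdf σ w * (w * (m + w))) :=
    (measurable_gpdf σ).mul (by fun_prop)
  have hq_int : Integrable (fun w => gpdf σ w * (w * (m + w))) := by
    refine hdom.mono' hq_meas.aestronglyMeasurable (Eventually.of_forall fun w => ?_)
    exact hbound w _ (le_refl _)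
  -- split off the constant Hbar
  have hsub : ∀ w : ℝ, gpdf σ w * (w * (HT lam (m+w) - Hbar)) =
      gpdf σ w * (w * HT lam (m+w)) - Hbar * (gpdf σ w * w) := by intro w; ring
  simp_rw [hsub]
  rw [integral_sub hwHT_int ((gpdf_id_int hσ).const_mul Hbar), integral_const_mul,
    gpdf_id_zero hσ, mul_zero, sub_zero]
  -- indicator form
  have hindic : ∀ w : ℝ, gpdf σ w * (w * HT lam (m + w)) =
      (Iic (-lam-m) ∪ Ici (lam-m)).indicator (fun w => gpdf σ w * (w * (m + w))) w := by
    intro w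
    rw [Set.indicator_apply]
    unfold HT
    by_cases hcase : |m+w| < lam
    · rw [if_pos hcase, if_neg (fun hc => absurd ((region_iff hlam m w).2 hc)
        (not_le.2 hcase))]
      ring
    · rw [if_neg hcase, if_pos ((region_iff hlam m w).1 (not_lt.1 hcase))]
  simp_rw [hindic]
  rw [integral_indicator (measurableSet_Iic.union measurableSet_Ici)]
  have hdisj : Disjoint (Iic (-lam-m)) (Ici (lam-m)) := by
    rw [Set.disjoint_left]
    intro x hx hx'
    simp only [mem_Iic] at hx
    simp only [mem_Ici] at hx'
    linarith
  rw [setIntegral_union hdisj measurableSet_Ici hq_int.integrableOn hq_int.integrableOn]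
  -- expand the integrand
  have hexpand : ∀ w : ℝ, gpdf σ w * (w * (m + w)) = (Real.sqrt (2*π*σ^2))⁻¹ *
      (m * (w * Real.exp (-w^2/(2*σ^2))) + w^2 * Real.exp (-w^2/(2*σ^2))) := by
    intro w; unfold gpdf; ring
  simp_rw [hexpand]
  rw [← Measure.restrict_congr_set (Ioi_ae_eq_Ici (a := lam - m))]
  rw [integral_const_mul, integral_const_mul]
  rw [integral_add (((int_we hσ).const_mul m).integrableOn) ((int_sqe hσ).integrableOn),
    integral_add (((int_we hσ).const_mul m).integrableOn) ((int_sqe hσ).integrableOn)]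
  rw [integral_const_mul, integral_const_mul]
  rw [intIic_we hσ, intIic_sqe hσ, intIoi_we hσ, intIoi_sqe hσ]
  -- final algebra
  unfold dval gpdf
  rw [integral_const_mul, integral_const_mul]
  have hEa : Real.exp (-(-lam-m)^2/(2*σ^2)) = Real.exp (-(lam+m)^2/(2*σ^2)) := by
    congr 1; ring
  rw [hEa, sqrt_two_pi_sq hσ]
  ring

end OmegaSpace

variable {σ lam : ℝ}

lemma exp_var_diff (hσ : 0 < σ) {hh : ℝ} (hh0 : 0 < hh) (t : ℝ) :
    |Real.exp (-t^2/(2*(σ^2+hh^2))) - Real.exp (-t^2/(2*σ^2))| ≤ hh^2/σ^2 := by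
  have hs2 : (0:ℝ) < σ^2 + hh^2 := by positivity
  have hmono' : t^2/(2*(σ^2+hh^2)) ≤ t^2/(2*σ^2) :=
    div_le_div_of_nonneg_left (sq_nonneg t) (by positivity) (by nlinarith)
  have hmono : Real.exp (-t^2/(2*σ^2)) ≤ Real.exp (-t^2/(2*(σ^2+hh^2))) := by
    apply Real.exp_le_exp.2
    rw [neg_div, neg_div]
    linarith
  rw [abs_of_nonneg (by linarith)]
  set x := t^2/(2*σ^2) - t^2/(2*(σ^2+hh^2)) with hx
  have hx0 : 0 ≤ x := by rw [hx]; linarith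
  have hxy : Real.exp (-t^2/(2*σ^2)) =
      Real.exp (-t^2/(2*(σ^2+hh^2))) * Real.exp (-x) := by
    rw [← Real.exp_add]; congr 1; rw [hx]; ring
  have h1mx : 1 - Real.exp (-x) ≤ x := by
    have := Real.add_one_le_exp (-x); linarith
  have hyexp : (t^2/(2*(σ^2+hh^2))) * Real.exp (-t^2/(2*(σ^2+hh^2))) ≤ 1 := by
    have h2 : t^2/(2*(σ^2+hh^2)) ≤ Real.exp (t^2/(2*(σ^2+hh^2))) := by
      have := Real.add_one_le_exp (t^2/(2*(σ^2+hh^2))); linarith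
    have h3 : Real.exp (-t^2/(2*(σ^2+hh^2))) = (Real.exp (t^2/(2*(σ^2+hh^2))))⁻¹ := by
      rw [← Real.exp_neg]; congr 1; ring
    rw [h3, mul_inv_le_iff₀ (Real.exp_pos _), one_mul]
    exact h2
  have hxval : x = (t^2/(2*(σ^2+hh^2))) * (hh^2/σ^2) := by
    rw [hx]; field_simp; ring
  calc Real.exp (-t^2/(2*(σ^2+hh^2))) - Real.exp (-t^2/(2*σ^2))
      = Real.exp (-t^2/(2*(σ^2+hh^2))) * (1 - Real.exp (-x)) := by rw [hxy]; ring
    _ ≤ Real.exp (-t^2/(2*(σ^2+hh^2))) * x :=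
        mul_le_mul_of_nonneg_left h1mx (Real.exp_nonneg _)
    _ = (t^2/(2*(σ^2+hh^2)) * Real.exp (-t^2/(2*(σ^2+hh^2)))) * (hh^2/σ^2) := by
        rw [hxval]; ring
    _ ≤ 1 * (hh^2/σ^2) := mul_le_mul_of_nonneg_right hyexp (by positivity)
    _ = hh^2/σ^2 := one_mul _

lemma bias_bound (hσ : 0 < σ) (hlam : 0 < lam) {hh : ℝ} (hh0 : 0 < hh) (m : ℝ) :
    |EFval σ lam hh m - dval σ lam m| ≤
      2 * lam * (Real.sqrt (2*π) * σ)⁻¹ * (hh^2/σ^2) := by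
  have hdiff : EFval σ lam hh m - dval σ lam m = lam * (Real.sqrt (2*π) * σ)⁻¹ *
      ((Real.exp (-(lam+m)^2/(2*(σ^2+hh^2))) - Real.exp (-(lam+m)^2/(2*σ^2))) +
       (Real.exp (-(lam-m)^2/(2*(σ^2+hh^2))) - Real.exp (-(lam-m)^2/(2*σ^2)))) := by
    unfold EFval dval; ring
  rw [hdiff, abs_mul]
  have hpos : 0 ≤ lam * (Real.sqrt (2*π) * σ)⁻¹ := by
    have : (0:ℝ) < Real.sqrt (2*π) := Real.sqrt_pos.2 (by positivity)
    positivity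
  rw [abs_of_nonneg hpos]
  have h1 := exp_var_diff hσ hh0 (lam+m)
  have h2 := exp_var_diff hσ hh0 (lam-m)
  have habs := abs_add_le (Real.exp (-(lam+m)^2/(2*(σ^2+hh^2))) - Real.exp (-(lam+m)^2/(2*σ^2)))
    (Real.exp (-(lam-m)^2/(2*(σ^2+hh^2))) - Real.exp (-(lam-m)^2/(2*σ^2)))
  calc lam * (Real.sqrt (2*π) * σ)⁻¹ * |_| ≤ lam * (Real.sqrt (2*π) * σ)⁻¹ * (2*(hh^2/σ^2)) := by
        apply mul_le_mul_of_nonneg_left _ hpos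
        linarith
    _ = 2 * lam * (Real.sqrt (2*π) * σ)⁻¹ * (hh^2/σ^2) := by ring

lemma cHT_nonneg (hσ : 0 < σ) (hlam : 0 < lam) {hh : ℝ} (hh0 : 0 < hh) :
    0 ≤ cHT σ lam hh := by
  unfold cHT
  have h1 : (0:ℝ) ≤ Real.sqrt (σ^2+hh^2) := Real.sqrt_nonneg _
  have h2 : (0:ℝ) < Real.sqrt (2*π) := Real.sqrt_pos.2 (by positivity)
  positivity

lemma cHT_sq (hσ : 0 < σ) (hlam : 0 < lam) {hh : ℝ} (hh0 : 0 < hh) :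
    (cHT σ lam hh)^2 = lam^2 * (σ^2+hh^2) / (2*π*σ^2*hh^2) := by
  unfold cHT
  rw [div_pow, mul_pow, mul_pow, mul_pow, Real.sq_sqrt (by positivity : (0:ℝ) ≤ σ^2+hh^2),
    Real.sq_sqrt (by positivity : (0:ℝ) ≤ 2*π)]
  try ring

lemma e1_lemma (hσ : 0 < σ) {hh : ℝ} (hh0 : 0 < hh) :
    4 * (lam^2 * (σ^2+hh^2) / (2*π*σ^2*hh^2)) * (2*(hh/σ)) * hh =
      4*lam^2*(σ^2+hh^2)/(π*σ^3) := by
  have hπ : (0:ℝ) < π := pi_pos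
  field_simp

lemma exp_kernel_le_one {c : ℝ} (hc : 0 < c) (x : ℝ) : Real.exp (-x^2/c) ≤ 1 := by
  rw [Real.exp_le_one_iff]
  exact div_nonpos_of_nonpos_of_nonneg (neg_nonpos.2 (sq_nonneg _)) hc.le

/-- The second moment of the per-coordinate estimator. -/
lemma sq_moment (hσ : 0 < σ) (hlam : 0 < lam) {hh : ℝ} (hh0 : 0 < hh) (hh1 : hh ≤ 1) (m : ℝ) :
    ∫ w, gpdf σ w * (Fest σ lam hh m w)^2 ≤ (2 + 4*lam^2*(σ^2+1)/σ^3) / hh := by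
  set c := cHT σ lam hh with hc
  have hc0 : 0 ≤ c := cHT_nonneg hσ hlam hh0
  -- the dominating function
  set g : ℝ → ℝ := fun w => 2 * gpdf σ w + 4*c^2 *
      (gpdf σ w * Real.exp (-(w - (-(m+lam)))^2/hh^2) +
       gpdf σ w * Real.exp (-(w - (lam-m))^2/hh^2)) with hg
  have hKint : ∀ t : ℝ, Integrable (fun w => gpdf σ w * Real.exp (-(w - t)^2/hh^2)) := by
    intro t
    refine (gpdf_integrable hσ).mono' (Measurable.aestronglyMeasurable (by
      exact (measurable_gpdf σ).mul (by fun_prop))) (Eventually.of_forall fun w => ?_)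
    rw [Real.norm_eq_abs, abs_of_nonneg (mul_nonneg (gpdf_nonneg σ w) (Real.exp_nonneg _))]
    have h1 : Real.exp (-(w - t)^2/hh^2) ≤ 1 := exp_kernel_le_one (by positivity) _
    nlinarith [gpdf_nonneg σ w, Real.exp_nonneg (-(w - t)^2/hh^2)]
  have hgint : Integrable g := by
    rw [hg]
    exact ((gpdf_integrable hσ).const_mul 2).add
      (((hKint _).add (hKint _)).const_mul (4*c^2))
  have hptle : ∀ w : ℝ, gpdf σ w * (Fest σ lam hh m w)^2 ≤ g w := by
    intro w
    have hgp := gpdf_nonneg σ w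
    have hker1 : Real.exp (-(m + w + lam)^2/(2*hh^2))^2 =
        Real.exp (-(w - (-(m+lam)))^2/hh^2) := by
      rw [sq, ← Real.exp_add]; congr 1; field_simp; ring
    have hker2 : Real.exp (-(m + w - lam)^2/(2*hh^2))^2 =
        Real.exp (-(w - (lam-m))^2/hh^2) := by
      rw [sq, ← Real.exp_add]; congr 1; field_simp; ring
    have hFsq : (Fest σ lam hh m w)^2 ≤ 2 + 4*c^2 *
        (Real.exp (-(w - (-(m+lam)))^2/hh^2) + Real.exp (-(w - (lam-m))^2/hh^2)) := by
      unfold Fest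
      rw [← hc, ← hker1, ← hker2]
      set i : ℝ := if lam < |m + w| then (1:ℝ) else 0 with hi
      have hi0 : 0 ≤ i := by rw [hi]; split <;> norm_num
      have hi1 : i ≤ 1 := by rw [hi]; split <;> norm_num
      set k1 := Real.exp (-(m + w + lam)^2/(2*hh^2)) with hk1
      set k2 := Real.exp (-(m + w - lam)^2/(2*hh^2)) with hk2
      have hk10 : 0 ≤ k1 := Real.exp_nonneg _
      have hk20 : 0 ≤ k2 := Real.exp_nonneg _
      nlinarith [sq_nonneg (i - c*(k1+k2)), sq_nonneg (k1 - k2), sq_nonneg (c*(k1+k2)),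
        mul_nonneg hc0 (add_nonneg hk10 hk20)]
    have := mul_le_mul_of_nonneg_left hFsq hgp
    rw [hg]
    dsimp only
    nlinarith [this]
  have hmono := integral_mono_of_nonneg
    (Eventually.of_forall fun w => mul_nonneg (gpdf_nonneg σ w) (sq_nonneg _))
    hgint (Eventually.of_forall hptle)
  refine le_trans hmono ?_
  -- compute the integral of g
  have hkern_val : ∀ t : ℝ, ∫ w, gpdf σ w * Real.exp (-(w - t)^2/hh^2) ≤ hh / σ := by
    intro t
    have hpt : ∀ w : ℝ, gpdf σ w * Real.exp (-(w - t)^2/hh^2) =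
        (Real.sqrt (2*π*σ^2))⁻¹ * (Real.exp (-(w-t)^2/(hh^2)) * Real.exp (-w^2/(2*σ^2))) := by
      intro w; unfold gpdf; ring
    simp_rw [hpt]
    rw [integral_const_mul, kern hσ t (by positivity : (0:ℝ) < hh^2)]
    have hb1 : Real.sqrt (π * (2*hh^2*σ^2)/(2*σ^2+hh^2)) ≤ Real.sqrt π * hh := by
      rw [show Real.sqrt π * hh = Real.sqrt (π * hh^2) by
        rw [Real.sqrt_mul pi_pos.le, Real.sqrt_sq hh0.le]]
      apply Real.sqrt_le_sqrt
      rw [div_le_iff₀ (by positivity)]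
      nlinarith [mul_nonneg (mul_nonneg pi_pos.le (sq_nonneg hh)) (sq_nonneg hh)]
    have hb2 : Real.exp (-t^2/(2*σ^2+hh^2)) ≤ 1 := exp_kernel_le_one (by positivity) _
    have hsp : (0:ℝ) ≤ Real.sqrt (π * (2*hh^2*σ^2)/(2*σ^2+hh^2)) := Real.sqrt_nonneg _
    have hc0inv : (0:ℝ) ≤ (Real.sqrt (2*π*σ^2))⁻¹ := by positivity
    calc (Real.sqrt (2*π*σ^2))⁻¹ * (Real.sqrt (π * (2*hh^2*σ^2)/(2*σ^2+hh^2)) *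
          Real.exp (-t^2/(2*σ^2+hh^2)))
        ≤ (Real.sqrt (2*π*σ^2))⁻¹ * (Real.sqrt π * hh * 1) := by
          apply mul_le_mul_of_nonneg_left _ hc0inv
          apply mul_le_mul hb1 hb2 (Real.exp_nonneg _) (by positivity)
      _ = Real.sqrt π * (Real.sqrt (2*π*σ^2))⁻¹ * hh := by ring
      _ ≤ hh / σ := by
          rw [sqrt_two_pi_sq hσ]
          rw [div_eq_mul_inv hh σ]
          have hsq2 : Real.sqrt π ≤ Real.sqrt (2*π) := Real.sqrt_le_sqrt (by nlinarith [pi_pos])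
          have h2p : (0:ℝ) < Real.sqrt (2*π) := Real.sqrt_pos.2 (by positivity)
          have key : Real.sqrt π * (Real.sqrt (2*π) * σ)⁻¹ ≤ σ⁻¹ := by
            rw [mul_inv]
            calc Real.sqrt π * ((Real.sqrt (2*π))⁻¹ * σ⁻¹)
                ≤ Real.sqrt (2*π) * ((Real.sqrt (2*π))⁻¹ * σ⁻¹) := by
                  apply mul_le_mul_of_nonneg_right hsq2 (by positivity)
              _ = σ⁻¹ := by field_simp
          calc Real.sqrt π * (Real.sqrt (2*π) * σ)⁻¹ * hh ≤ σ⁻¹ * hh :=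
                mul_le_mul_of_nonneg_right key hh0.le
            _ = hh * σ⁻¹ := by ring
  have hgval : ∫ w, g w = 2 + 4*c^2 * ((∫ w, gpdf σ w * Real.exp (-(w - (-(m+lam)))^2/hh^2)) +
      ∫ w, gpdf σ w * Real.exp (-(w - (lam-m))^2/hh^2)) := by
    rw [hg]
    have I1 := integral_add ((gpdf_integrable hσ).const_mul 2)
      (((hKint (-(m+lam))).add (hKint (lam-m))).const_mul (4*c^2))
    simp only [Pi.add_apply] at I1
    have I2 := integral_add (hKint (-(m+lam))) (hKint (lam-m))
    rw [I1, integral_const_mul, integral_const_mul, gpdf_total hσ, I2]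
    ring
  rw [hgval]
  have hV1 := hkern_val (-(m+lam))
  have hV2 := hkern_val (lam-m)
  have hV1' : (0:ℝ) ≤ ∫ w, gpdf σ w * Real.exp (-(w - (-(m+lam)))^2/hh^2) :=
    integral_nonneg fun w => mul_nonneg (gpdf_nonneg σ w) (Real.exp_nonneg _)
  have hcsq := cHT_sq hσ hlam hh0
  have hπ : (1:ℝ) ≤ π := by nlinarith [pi_gt_three]
  have hσ3 : (0:ℝ) < σ^3 := by positivity
  have hh2le : hh^2 ≤ 1 := by nlinarith
  have hV2' : (0:ℝ) ≤ ∫ w, gpdf σ w * Real.exp (-(w - (lam-m))^2/hh^2) :=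
    integral_nonneg fun w => mul_nonneg (gpdf_nonneg σ w) (Real.exp_nonneg _)
  have hc2 : (0:ℝ) ≤ 4*c^2 := by positivity
  have hstep1 : 4*c^2 * ((∫ w, gpdf σ w * Real.exp (-(w - (-(m+lam)))^2/hh^2)) +
      ∫ w, gpdf σ w * Real.exp (-(w - (lam-m))^2/hh^2)) ≤ 4*c^2 * (2*(hh/σ)) := by
    apply mul_le_mul_of_nonneg_left _ hc2
    linarith
  have hstep2 : 4*c^2 * (2*(hh/σ)) ≤ 4*lam^2*(σ^2+1)/σ^3 / hh := by
    rw [hcsq, le_div_iff₀ hh0]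
    rw [e1_lemma hσ hh0]
    apply div_le_div₀ (by positivity) ?_ (by positivity) ?_
    · nlinarith [mul_nonneg (sq_nonneg lam) (by linarith : (0:ℝ) ≤ 1 - hh^2)]
    · nlinarith [hσ3, hπ]
  have h2div : (2:ℝ) ≤ 2/hh := by
    rw [le_div_iff₀ hh0]; nlinarith
  have hsplit : (2 + 4*lam^2*(σ^2+1)/σ^3) / hh = 2/hh + (4*lam^2*(σ^2+1)/σ^3)/hh := by
    rw [add_div]
  rw [hsplit]
  linarith

variable {σ lam : ℝ}

lemma measurable_Fest (σ lam hh m : ℝ) : Measurable (Fest σ lam hh m) := by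
  unfold Fest
  apply Measurable.add
  · exact Measurable.ite (measurableSet_lt measurable_const (by fun_prop))
      measurable_const measurable_const
  · fun_prop

lemma Fest_mem_Icc (hσ : 0 < σ) (hlam : 0 < lam) {hh : ℝ} (hh0 : 0 < hh) (m w : ℝ) :
    Fest σ lam hh m w ∈ Icc (0:ℝ) (1 + 2 * cHT σ lam hh) := by
  have hc := cHT_nonneg hσ hlam hh0 (lam := lam)
  have e1 : Real.exp (-(m + w + lam)^2/(2*hh^2)) ≤ 1 := exp_kernel_le_one (by positivity) _
  have e2 : Real.exp (-(m + w - lam)^2/(2*hh^2)) ≤ 1 := exp_kernel_le_one (by positivity) _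
  have e1' := Real.exp_nonneg (-(m + w + lam)^2/(2*hh^2))
  have e2' := Real.exp_nonneg (-(m + w - lam)^2/(2*hh^2))
  unfold Fest
  constructor
  · split <;> nlinarith
  · split <;> nlinarith


end SD

open SD

/-- consistency of the DOF estimator: `(1/P)(EDOF_HT(Y, λ, h(P)) − DOF_HT(x0, λ))`
converges to `0` in probability as `P → ∞`. -/
theorem score_dof_consistency
    {Ω : Type*} [MeasurableSpace Ω] (μpr : Measure Ω) [IsProbabilityMeasure μpr]
    (σ lam : ℝ) (hσ : 0 < σ) (hlam : 0 < lam)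
    (x0 : ℕ → ℝ) (W : ℕ → Ω → ℝ)
    (hmeas : ∀ i, Measurable (W i))
    (hindep : iIndepFun W μpr)
    (hdist : ∀ i, Measure.map (W i) μpr = gaussianReal 0 ⟨σ ^ 2, sq_nonneg σ⟩)
    (h : ℕ → ℝ) (hpos : ∀ P, 0 < h P)
    (hh0 : Tendsto h atTop (nhds 0))
    (hPh : Tendsto (fun P : ℕ => 1 / ((P : ℝ) * h P)) atTop (nhds 0)) :
    TendstoInMeasure μpr
      (fun (P : ℕ) ω => (1 / (P : ℝ)) *
        (EDOF σ lam (h P) P (fun i => x0 i + W i ω) -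
          DOF μpr σ lam P (fun i ω' => x0 i + W i ω')))
      atTop (fun _ => 0) := by
  -- abbreviations
  set Cv : ℝ := 2 + 4*lam^2*(σ^2+1)/σ^3 with hCv
  have hCvpos : 0 < Cv := by rw [hCv]; positivity
  set Cb : ℝ := 2 * lam * (Real.sqrt (2*π) * σ)⁻¹ * (1/σ^2) with hCb
  have hCbpos : 0 < Cb := by
    rw [hCb]
    have : (0:ℝ) < Real.sqrt (2*π) := Real.sqrt_pos.2 (by positivity)
    positivity
  -- the estimator functions
  set F : ℕ → ℕ → Ω → ℝ := fun P i ω => Fest σ lam (h P) (x0 i) (W i ω) with hF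
  have hFmeas : ∀ P i, Measurable (F P i) := fun P i =>
    (measurable_Fest σ lam (h P) (x0 i)).comp (hmeas i)
  have hFbdd : ∀ P i ω, F P i ω ∈ Icc (0:ℝ) (1 + 2 * cHT σ lam (h P)) := fun P i ω =>
    Fest_mem_Icc hσ hlam (hpos P) (x0 i) (W i ω)
  have hFmem : ∀ P i, MemLp (F P i) 2 μpr := fun P i =>
    memLp_of_bounded (Eventually.of_forall (hFbdd P i))
      (hFmeas P i).aestronglyMeasurable 2
  have hFint : ∀ P i, Integrable (F P i) μpr := fun P i =>
    (hFmem P i).integrable one_le_two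
  -- expectations
  have hFexp : ∀ P i, ∫ ω, F P i ω ∂μpr = EFval σ lam (h P) (x0 i) := by
    intro P i
    rw [hF]
    have h1 := comp_integral hσ (hmeas i) (hdist i) (measurable_Fest σ lam (h P) (x0 i))
    have h2 := EF_eq hσ hlam (hpos P) (x0 i)
    rw [integral_gauss hσ] at h2
    rw [h1, h2]
  -- the EDOF rewrite
  have hEDOF : ∀ P ω, EDOF σ lam (h P) P (fun i => x0 i + W i ω) =
      ∑ i ∈ Finset.range P, F P i ω := by
    intro P ω
    unfold EDOF
    rw [Finset.mul_sum, ← Finset.sum_add_distrib]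
    rfl
  -- the DOF rewrite
  have hDOF : ∀ P, DOF μpr σ lam P (fun i ω' => x0 i + W i ω') =
      ∑ i ∈ Finset.range P, dval σ lam (x0 i) := by
    intro P
    unfold DOF
    refine Finset.sum_congr rfl fun i _ => ?_
    have := cov_eq hσ hlam (hmeas i) (hdist i) (x0 i)
    rw [this]
    field_simp
  -- variance of each coordinate
  have hFvar : ∀ P i, h P ≤ 1 → variance (F P i) μpr ≤ Cv / h P := by
    intro P i hP1
    refine le_trans (variance_le_expectation_sq (hFmeas P i).aestronglyMeasurable) ?_
    have h1 : ∫ ω, ((F P i)^2) ω ∂μpr = ∫ w, gpdf σ w * (Fest σ lam (h P) (x0 i) w)^2 := by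
      simp only [Pi.pow_apply]
      exact comp_integral hσ (hmeas i) (hdist i)
        ((measurable_Fest σ lam (h P) (x0 i)).pow_const 2)
    rw [h1]
    exact sq_moment hσ hlam (hpos P) hP1 (x0 i)
  -- independence
  have hFindep : ∀ P, iIndepFun (F P) μpr := fun P =>
    hindep.comp (fun i => Fest σ lam (h P) (x0 i))
      (fun i => measurable_Fest σ lam (h P) (x0 i))
  -- sums
  set T : ℕ → Ω → ℝ := fun P => ∑ i ∈ Finset.range P, F P i with hT
  have hTapp : ∀ P ω, T P ω = ∑ i ∈ Finset.range P, F P i ω := by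
    intro P ω
    rw [hT]
    simp [Finset.sum_apply]
  have hTmem : ∀ P, MemLp (T P) 2 μpr := fun P =>
    memLp_finset_sum' _ (fun i _ => hFmem P i)
  have hTvar : ∀ P, h P ≤ 1 → variance (T P) μpr ≤ (P : ℝ) * (Cv / h P) := by
    intro P hP1
    rw [hT]
    rw [IndepFun.variance_sum (fun i _ => hFmem P i)
      (fun i _ j _ hij => (hFindep P).indepFun hij)]
    calc ∑ i ∈ Finset.range P, variance (F P i) μpr
        ≤ ∑ _i ∈ Finset.range P, (Cv / h P) := Finset.sum_le_sum fun i _ => hFvar P i hP1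
      _ = (P : ℝ) * (Cv / h P) := by
          rw [Finset.sum_const, Finset.card_range, nsmul_eq_mul]
  set Xt : ℕ → Ω → ℝ := fun P => (1/(P:ℝ)) • T P with hXt
  have hXtmem : ∀ P, MemLp (Xt P) 2 μpr := fun P => (hTmem P).const_smul _
  have hXtmean : ∀ P, ∫ ω, Xt P ω ∂μpr =
      (1/(P:ℝ)) * ∑ i ∈ Finset.range P, EFval σ lam (h P) (x0 i) := by
    intro P
    rw [hXt]
    simp only [Pi.smul_apply, smul_eq_mul]
    rw [integral_const_mul]
    congr 1
    have hTfun : T P = fun ω => ∑ i ∈ Finset.range P, F P i ω := funext (hTapp P)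
    rw [hTfun, integral_finset_sum _ (fun i _ => hFint P i)]
    exact Finset.sum_congr rfl fun i _ => hFexp P i
  have hXtvar : ∀ P, variance (Xt P) μpr = (1/(P:ℝ))^2 * variance (T P) μpr := fun P =>
    variance_smul _ _ _
  -- bias
  set B : ℕ → ℝ := fun P => (1/(P:ℝ)) *
      (∑ i ∈ Finset.range P, (EFval σ lam (h P) (x0 i) - dval σ lam (x0 i))) with hB
  have hBbound : ∀ P, |B P| ≤ Cb * (h P)^2 := by
    intro P
    rw [hB]
    dsimp only
    rw [abs_mul]
    have habs1 : |(1:ℝ)/(P:ℝ)| = 1/(P:ℝ) := abs_of_nonneg (by positivity)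
    rw [habs1]
    have hsum : |∑ i ∈ Finset.range P, (EFval σ lam (h P) (x0 i) - dval σ lam (x0 i))| ≤
        (P : ℝ) * (Cb * (h P)^2) := by
      refine le_trans (Finset.abs_sum_le_sum_abs _ _) ?_
      calc ∑ i ∈ Finset.range P, |EFval σ lam (h P) (x0 i) - dval σ lam (x0 i)|
          ≤ ∑ _i ∈ Finset.range P, (Cb * (h P)^2) := by
            refine Finset.sum_le_sum fun i _ => ?_
            refine le_trans (bias_bound hσ hlam (hpos P) (x0 i)) ?_
            rw [hCb]; ring_nf; exact le_refl _
        _ = (P : ℝ) * (Cb * (h P)^2) := by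
            rw [Finset.sum_const, Finset.card_range, nsmul_eq_mul]
    rcases Nat.eq_zero_or_pos P with hP0 | hPpos
    · subst hP0
      simp
      positivity
    · have hPr : (0:ℝ) < P := by exact_mod_cast hPpos
      calc (1/(P:ℝ)) * |∑ i ∈ Finset.range P, (EFval σ lam (h P) (x0 i) - dval σ lam (x0 i))|
          ≤ (1/(P:ℝ)) * ((P : ℝ) * (Cb * (h P)^2)) :=
            mul_le_mul_of_nonneg_left hsum (by positivity)
        _ = Cb * (h P)^2 := by field_simp
  have hBtends : Tendsto (fun P => Cb * (h P)^2) atTop (𝓝 0) := by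
    have h2 : Tendsto (fun P => (h P)^2) atTop (𝓝 0) := by
      have := hh0.mul hh0
      simpa [pow_two] using this
    simpa using h2.const_mul Cb
  -- conclusion
  refine tendstoInMeasure_iff_dist.2 fun ε hε => ?_
  have hupper : Tendsto (fun P : ℕ => ENNReal.ofReal ((4*Cv/ε^2) * (1/((P:ℝ) * h P))))
      atTop (𝓝 0) := by
    have h1 : Tendsto (fun P : ℕ => (4*Cv/ε^2) * (1/((P:ℝ) * h P))) atTop (𝓝 0) := by
      simpa using hPh.const_mul (4*Cv/ε^2)
    have h2 := ENNReal.tendsto_ofReal h1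
    simpa using h2
  apply tendsto_of_tendsto_of_tendsto_of_le_of_le' tendsto_const_nhds hupper
  · exact Eventually.of_forall fun P => zero_le
  · have hev1 : ∀ᶠ P in atTop, h P ≤ 1 := hh0.eventually (eventually_le_nhds one_pos)
    have hev2 : ∀ᶠ P in atTop, Cb * (h P)^2 ≤ ε/2 :=
      hBtends.eventually (eventually_le_nhds (half_pos hε))
    have hev3 : ∀ᶠ P : ℕ in atTop, 1 ≤ P := eventually_ge_atTop 1
    filter_upwards [hev1, hev2, hev3] with P hP1 hPB hPge
    have hPpos : (0:ℝ) < (P : ℝ) := by exact_mod_cast hPge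
    have hZeq : ∀ ω, (1 / (P : ℝ)) * (EDOF σ lam (h P) P (fun i => x0 i + W i ω) -
        DOF μpr σ lam P (fun i ω' => x0 i + W i ω')) - B P = Xt P ω - ∫ x, Xt P x ∂μpr := by
      intro ω
      rw [hEDOF P ω, hDOF P, hXtmean P, hB]
      rw [hXt]
      simp only [Pi.smul_apply, smul_eq_mul]
      rw [hTapp P ω, Finset.sum_sub_distrib]
      ring
    have hsubset : {ω | ε ≤ dist ((1 / (P : ℝ)) *
        (EDOF σ lam (h P) P (fun i => x0 i + W i ω) -
          DOF μpr σ lam P (fun i ω' => x0 i + W i ω'))) 0} ⊆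
        {ω | ε/2 ≤ |Xt P ω - ∫ x, Xt P x ∂μpr|} := by
      intro ω hω
      simp only [mem_setOf_eq, Real.dist_eq, sub_zero] at hω
      simp only [mem_setOf_eq]
      rw [← hZeq ω]
      have habs := abs_sub_abs_le_abs_sub
        ((1 / (P : ℝ)) * (EDOF σ lam (h P) P (fun i => x0 i + W i ω) -
          DOF μpr σ lam P (fun i ω' => x0 i + W i ω'))) (B P)
      have hBP := hBbound P
      linarith [le_trans hBP hPB]
    refine le_trans (measure_mono hsubset) ?_
    refine le_trans (meas_ge_le_variance_div_sq (hXtmem P) (half_pos hε)) ?_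
    apply ENNReal.ofReal_le_ofReal
    have hv1 : variance (Xt P) μpr ≤ Cv/((P:ℝ)*h P) := by
      rw [hXtvar P]
      calc (1/(P:ℝ))^2 * variance (T P) μpr
          ≤ (1/(P:ℝ))^2 * ((P:ℝ) * (Cv / h P)) :=
            mul_le_mul_of_nonneg_left (hTvar P hP1) (by positivity)
        _ = Cv/((P:ℝ)*h P) := by
            have hp : (P:ℝ) ≠ 0 := hPpos.ne'
            have hhne : h P ≠ 0 := (hpos P).ne'
            field_simp
    calc variance (Xt P) μpr / (ε/2)^2 ≤ (Cv/((P:ℝ)*h P)) / (ε/2)^2 := by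
          gcongr
      _ = (4*Cv/ε^2) * (1/((P:ℝ)*h P)) := by
          have hp : (P:ℝ) ≠ 0 := hPpos.ne'
          have hhne : h P ≠ 0 := (hpos P).ne'
          have hεne : ε ≠ 0 := hε.ne'
          field_simp
          ring
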